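/- arXiv:1711.08356 — 5 statements merged into one kernel-verified Lean document; each statement's English description precedes it below -/
import Mathlib

section
/- Let e ∈ ℝ and σ > 0, and let Φ : ℝ → ℝ be the normal uncertainty distribution Φ(x) = (1 + exp(π(e − x)/(√3 σ)))⁻¹. Then the functions x ↦ 1 − Φ(x) on (0,∞) and x ↦ Φ(x) on (−∞,0) are Lebesgue integrable, and ∫₀^{+∞} (1 − Φ(x)) dx − ∫_{−∞}^0 Φ(x) dx = e. -/
open Real Set MeasureTheory Filter

/-- for the normal uncertainty distribution `Φ` with parameters
`e` and `σ > 0`, the tail functions are integrable and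
`∫₀^∞ (1 − Φ(x)) dx − ∫_{−∞}^0 Φ(x) dx = e`. -/
theorem normal_uncertainty_expected_value
    (e σ : ℝ) (hσ : 0 < σ) (Φ : ℝ → ℝ)
    (hΦ : ∀ x : ℝ, Φ x = (1 + Real.exp (π * (e - x) / (Real.sqrt 3 * σ)))⁻¹) :
    IntegrableOn (fun x => 1 - Φ x) (Ioi (0 : ℝ)) ∧
    IntegrableOn Φ (Iio (0 : ℝ)) ∧
    (∫ x in Ioi (0 : ℝ), (1 - Φ x)) - (∫ x in Iio (0 : ℝ), Φ x) = e := by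
  set c : ℝ := π / (Real.sqrt 3 * σ) with hc_def
  have hs3 : (0:ℝ) < Real.sqrt 3 * σ := by positivity
  have hc : 0 < c := div_pos Real.pi_pos hs3
  have hΦ' : ∀ x : ℝ, Φ x = (1 + Real.exp (c * (e - x)))⁻¹ := by
    intro x
    rw [hΦ x]
    congr 2
    rw [hc_def, div_mul_eq_mul_div]
  have hpos : ∀ x : ℝ, (0:ℝ) < 1 + Real.exp (c * (e - x)) := fun x => by positivity
  have hpos' : ∀ x : ℝ, (0:ℝ) < 1 + Real.exp (c * (x - e)) := fun x => by positivity
  -- the antiderivative on the right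
  set g : ℝ → ℝ := fun x => -c⁻¹ * Real.log (1 + Real.exp (c * (e - x))) with hg_def
  have hderiv1 : ∀ x : ℝ, HasDerivAt g (1 - Φ x) x := by
    intro x
    have h1 : HasDerivAt (fun y : ℝ => c * (e - y)) (c * (-1)) x :=
      ((hasDerivAt_id x).const_sub e).const_mul c
    have h2 : HasDerivAt (fun y : ℝ => 1 + Real.exp (c * (e - y)))
        (Real.exp (c * (e - x)) * (c * (-1))) x := (h1.exp).const_add 1
    have h3 := (h2.log (hpos x).ne').const_mul (-c⁻¹)
    refine h3.congr_deriv ?_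
    symm
    rw [hΦ' x]
    field_simp
    ring
  have hnonneg1 : ∀ x : ℝ, 0 ≤ 1 - Φ x := by
    intro x
    rw [hΦ' x]
    have h1 : (1:ℝ) ≤ 1 + Real.exp (c * (e - x)) := by
      have := Real.exp_pos (c * (e - x)); linarith
    have := inv_le_one_of_one_le₀ h1
    linarith
  have htend1 : Tendsto g atTop (nhds 0) := by
    have harg : Tendsto (fun x : ℝ => c * (e - x)) atTop atBot := by
      apply Tendsto.const_mul_atBot hc
      apply tendsto_atBot_add_const_left
      exact tendsto_neg_atTop_atBot
    have hexp : Tendsto (fun x : ℝ => Real.exp (c * (e - x))) atTop (nhds 0) :=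
      Real.tendsto_exp_atBot.comp harg
    have hlog : Tendsto (fun x : ℝ => Real.log (1 + Real.exp (c * (e - x)))) atTop
        (nhds 0) := by
      have h1 : Tendsto (fun x : ℝ => 1 + Real.exp (c * (e - x))) atTop (nhds 1) := by
        simpa using hexp.const_add 1
      have := (Real.continuousAt_log (by norm_num : (1:ℝ) ≠ 0)).tendsto.comp h1
      simpa [Function.comp_def] using this
    have := hlog.const_mul (-c⁻¹)
    simpa [hg_def, neg_mul] using this
  have hint1 : IntegrableOn (fun x => 1 - Φ x) (Ioi (0 : ℝ)) :=
    integrableOn_Ioi_deriv_of_nonneg' (fun x _ => hderiv1 x) (fun x _ => hnonneg1 x) htend1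
  have hval1 : (∫ x in Ioi (0 : ℝ), (1 - Φ x)) = 0 - g 0 :=
    integral_Ioi_of_hasDerivAt_of_nonneg' (fun x _ => hderiv1 x) (fun x _ => hnonneg1 x) htend1
  -- the antiderivative on the left
  set G : ℝ → ℝ := fun x => c⁻¹ * Real.log (1 + Real.exp (c * (x - e))) with hG_def
  have hderiv2 : ∀ x : ℝ, HasDerivAt G (Φ x) x := by
    intro x
    have h1 : HasDerivAt (fun y : ℝ => c * (y - e)) (c * 1) x :=
      ((hasDerivAt_id x).sub_const e).const_mul c
    have h2 : HasDerivAt (fun y : ℝ => 1 + Real.exp (c * (y - e)))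
        (Real.exp (c * (x - e)) * (c * 1)) x := (h1.exp).const_add 1
    have h3 := (h2.log (hpos' x).ne').const_mul c⁻¹
    refine h3.congr_deriv ?_
    symm
    rw [hΦ' x, show c * (e - x) = -(c * (x - e)) by ring, Real.exp_neg]
    have hE := Real.exp_pos (c * (x - e))
    field_simp
    ring
  have htend2 : Tendsto G atBot (nhds 0) := by
    have harg : Tendsto (fun x : ℝ => c * (x - e)) atBot atBot := by
      apply Tendsto.const_mul_atBot hc
      exact tendsto_atBot_add_const_right _ (-e) tendsto_id
    have hexp : Tendsto (fun x : ℝ => Real.exp (c * (x - e))) atBot (nhds 0) :=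
      Real.tendsto_exp_atBot.comp harg
    have hlog : Tendsto (fun x : ℝ => Real.log (1 + Real.exp (c * (x - e)))) atBot
        (nhds 0) := by
      have h1 : Tendsto (fun x : ℝ => 1 + Real.exp (c * (x - e))) atBot (nhds 1) := by
        simpa using hexp.const_add 1
      have := (Real.continuousAt_log (by norm_num : (1:ℝ) ≠ 0)).tendsto.comp h1
      simpa [Function.comp_def] using this
    simpa using hlog.const_mul c⁻¹
  -- integrability of Φ on (-∞, 0]
  have hΦcont : Continuous Φ := by
    have : Continuous fun x : ℝ => (1 + Real.exp (c * (e - x)))⁻¹ := by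
      apply Continuous.inv₀
      · fun_prop
      · exact fun x => (hpos x).ne'
    exact this.congr fun x => (hΦ' x).symm
  have hexp_int : IntegrableOn (fun x : ℝ => Real.exp (c * (x - e))) (Iic (0 : ℝ)) := by
    have h0 : IntegrableOn (fun x : ℝ => Real.exp (-c * e) * Real.exp (-c * x))
        (Ioi (0 : ℝ)) := (exp_neg_integrableOn_Ioi 0 hc).const_mul _
    have h1 : IntegrableOn ((fun x : ℝ => Real.exp (-c * e) * Real.exp (-c * x)) ∘ Neg.neg)
        (Neg.neg ⁻¹' (Ioi (0 : ℝ))) :=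
      ((MeasurePreserving.integrableOn_comp_preimage (Measure.measurePreserving_neg _)
        (Homeomorph.neg ℝ).measurableEmbedding).2 h0)
    have hpre : (Neg.neg ⁻¹' (Ioi (0 : ℝ)) : Set ℝ) = Iio 0 := by
      ext x; simp [neg_pos]
    rw [hpre] at h1
    rw [integrableOn_Iic_iff_integrableOn_Iio]
    apply h1.congr_fun _ measurableSet_Iio
    intro x _
    simp only [Function.comp_apply]
    rw [← Real.exp_add]
    ring_nf
  have hbound : ∀ x : ℝ, ‖Φ x‖ ≤ Real.exp (c * (x - e)) := by
    intro x
    rw [hΦ' x, Real.norm_eq_abs, abs_of_pos (inv_pos.2 (hpos x))]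
    have hE : (0:ℝ) < Real.exp (c * (e - x)) := Real.exp_pos _
    have h1 : Real.exp (c * (e - x)) ≤ 1 + Real.exp (c * (e - x)) := by linarith
    have h2 := inv_anti₀ hE h1
    calc (1 + Real.exp (c * (e - x)))⁻¹ ≤ (Real.exp (c * (e - x)))⁻¹ := h2
      _ = Real.exp (c * (x - e)) := by
          rw [← Real.exp_neg]; ring_nf
  have hint2 : IntegrableOn Φ (Iic (0 : ℝ)) := by
    apply hexp_int.mono' (hΦcont.aestronglyMeasurable.restrict)
    exact Filter.Eventually.of_forall fun x => hbound x
  have hint2' : IntegrableOn Φ (Iio (0 : ℝ)) := hint2.mono_set Iio_subset_Iic_self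
  have hval2 : (∫ x in Iic (0 : ℝ), Φ x) = G 0 - 0 :=
    integral_Iic_of_hasDerivAt_of_tendsto' (fun x _ => hderiv2 x) hint2 htend2
  refine ⟨hint1, hint2', ?_⟩
  rw [← integral_Iic_eq_integral_Iio, hval1, hval2]
  simp only [hg_def, hG_def, zero_sub, sub_zero, sub_zero, mul_zero, zero_sub, neg_neg]
  have hkey : Real.log (1 + Real.exp (c * e)) =
      c * e + Real.log (1 + Real.exp (-(c * e))) := by
    have h1 : (1:ℝ) + Real.exp (c * e) = Real.exp (c * e) * (1 + Real.exp (-(c * e))) := by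
      rw [mul_add, mul_one, ← Real.exp_add, add_neg_cancel, Real.exp_zero, add_comm]
    rw [h1, Real.log_mul (Real.exp_ne_zero _) (by positivity), Real.log_exp]
  rw [show c * -e = -(c * e) by ring, hkey]
  field_simp
  ring
end

section
/- Let N, M, k, J, V > 0, μ ∈ ℝ, τ > 0 and σ > 0, and set c = σ√3 τ/π. The function α ↦ max(k·V·exp(μτ + c·ln(α/(1−α))) − N·J, 0) is Lebesgue integrable on (0,1) if and only if c < 1. -/
open Real Set MeasureTheory

/-- the warrant payoff integrand is Lebesgue integrable on `(0,1)`
if and only if `c = σ√3 τ/π < 1`. -/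
theorem warrant_integrand_integrable_iff
    (N M k J V μ τ σ : ℝ)
    (hN : 0 < N) (hM : 0 < M) (hk : 0 < k) (hJ : 0 < J) (hV : 0 < V)
    (hτ : 0 < τ) (hσ : 0 < σ)
    (c : ℝ) (hc : c = σ * Real.sqrt 3 * τ / π) :
    IntegrableOn
      (fun α : ℝ => max (k * V * Real.exp (μ * τ + c * Real.log (α / (1 - α))) - N * J) 0)
      (Ioo (0 : ℝ) 1) ↔ c < 1 := by
  have hc0 : 0 < c := by
    rw [hc]
    have h3 : (0:ℝ) < Real.sqrt 3 := Real.sqrt_pos.mpr (by norm_num)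
    positivity
  set A : ℝ := k * V * Real.exp (μ * τ) with hA
  have hA0 : 0 < A := by positivity
  -- rewrite the exponential in rpow form on (0,1)
  have key : ∀ α ∈ Ioo (0:ℝ) 1,
      k * V * Real.exp (μ * τ + c * Real.log (α / (1 - α))) = A * (α / (1 - α)) ^ c := by
    intro α hα
    have hα0 : 0 < α := hα.1
    have hα1 : 0 < 1 - α := by linarith [hα.2]
    have hr : 0 < α / (1 - α) := div_pos hα0 hα1
    rw [Real.exp_add, Real.rpow_def_of_pos hr, mul_comm (Real.log _) c, hA]
    ring
  have hmeas : Measurable (fun α : ℝ =>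
      max (k * V * Real.exp (μ * τ + c * Real.log (α / (1 - α))) - N * J) 0) := by
    apply Measurable.max _ measurable_const
    apply Measurable.sub _ measurable_const
    exact (measurable_const.mul ((measurable_const.add
      (measurable_const.mul (Real.measurable_log.comp
        (measurable_id.div (measurable_const.sub measurable_id))))).exp))
  constructor
  · -- forward: integrable → c < 1
    intro hint
    by_contra hcon
    push_neg at hcon  -- 1 ≤ c
    have hsub : Ioo (1/2 : ℝ) 1 ⊆ Ioo 0 1 := fun x hx => ⟨by linarith [hx.1], hx.2⟩
    have hint2 := hint.mono_set hsub
    set D : ℝ := A * (1/2 : ℝ) ^ c with hD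
    have hD0 : 0 < D := mul_pos hA0 (Real.rpow_pos_of_pos (by norm_num) c)
    have hg : IntegrableOn (fun α : ℝ => D * (1 - α)⁻¹) (Ioo (1/2 : ℝ) 1) := by
      have hgint : IntegrableOn (fun α : ℝ =>
          max (k * V * Real.exp (μ * τ + c * Real.log (α / (1 - α))) - N * J) 0 + N * J)
          (Ioo (1/2 : ℝ) 1) := by
        apply hint2.add
        exact integrableOn_const (by simp [Real.volume_Ioo])
      apply Integrable.mono' hgint
      · exact (measurable_const.mul
          ((measurable_const.sub measurable_id).inv)).aestronglyMeasurable
      · filter_upwards [ae_restrict_mem measurableSet_Ioo] with α hα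
        have hα0 : (1/2 : ℝ) < α := hα.1
        have hα1 : 0 < 1 - α := by linarith [hα.2]
        have hαle : 1 - α ≤ 1 := by linarith
        -- (1-α)⁻¹ ≤ (1-α)^(-c)
        have h1 : (1 - α) ^ (-1 : ℝ) ≤ (1 - α) ^ (-c) :=
          Real.rpow_le_rpow_of_exponent_ge hα1 hαle (by linarith)
        have h2 : ((1:ℝ)/2) ^ c ≤ α ^ c :=
          Real.rpow_le_rpow (by norm_num) hα0.le hc0.le
        have hrpow : D * (1 - α)⁻¹ ≤ A * (α / (1 - α)) ^ c := by
          have hdiv : (α / (1 - α)) ^ c = α ^ c * ((1 - α) ^ c)⁻¹ := by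
            rw [Real.div_rpow (by linarith) hα1.le, div_eq_mul_inv]
          have hnegc : (1 - α) ^ (-c) = ((1 - α) ^ c)⁻¹ := Real.rpow_neg hα1.le c
          have hneg1 : (1 - α) ^ (-1 : ℝ) = (1 - α)⁻¹ := Real.rpow_neg_one _
          rw [hD, hdiv, mul_assoc]
          apply mul_le_mul_of_nonneg_left _ hA0.le
          calc (1/2 : ℝ) ^ c * (1 - α)⁻¹ ≤ (1/2 : ℝ) ^ c * ((1 - α) ^ c)⁻¹ := by
                apply mul_le_mul_of_nonneg_left _ (Real.rpow_nonneg (by norm_num) c)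
                rw [← hneg1, ← hnegc]; exact h1
            _ ≤ α ^ c * ((1 - α) ^ c)⁻¹ := by
                apply mul_le_mul_of_nonneg_right h2
                positivity
        have hX := key α (hsub hα)
        rw [Real.norm_eq_abs, abs_of_nonneg (by positivity : (0:ℝ) ≤ D * (1 - α)⁻¹)]
        have : A * (α / (1 - α)) ^ c - N * J ≤
            max (k * V * Real.exp (μ * τ + c * Real.log (α / (1 - α))) - N * J) 0 := by
          rw [hX]; exact le_max_left _ _
        linarith
    -- derive contradiction: (1-α)⁻¹ is not integrable near 1
    have hinv : IntegrableOn (fun α : ℝ => (1 - α)⁻¹) (Ioo (1/2 : ℝ) 1) := by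
      have h' := hg.const_mul D⁻¹
      refine IntegrableOn.congr_fun h' (fun α _ => ?_) measurableSet_Ioo
      field_simp
    have hIoc : IntegrableOn (fun α : ℝ => (1 - α)⁻¹) (Ioc (1/2 : ℝ) 1) :=
      (integrableOn_Ioc_iff_integrableOn_Ioo).2 hinv
    have hII : IntervalIntegrable (fun α : ℝ => (1 - α)⁻¹) volume (1/2) 1 := by
      rw [intervalIntegrable_iff, uIoc_of_le (by norm_num : (1/2:ℝ) ≤ 1)]
      exact hIoc
    have hII2 : IntervalIntegrable (fun α : ℝ => (α - 1)⁻¹) volume (1/2) 1 := by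
      have heq : (fun α : ℝ => (α - 1)⁻¹) = fun α : ℝ => -((1 - α)⁻¹) := by
        funext α; rw [← neg_sub (1:ℝ) α, inv_neg]
      rw [heq]
      exact hII.neg
    rw [intervalIntegrable_sub_inv_iff] at hII2
    rcases hII2 with h | h
    · norm_num at h
    · exact h (by rw [uIcc_of_le (by norm_num : (1/2:ℝ) ≤ 1)]; constructor <;> norm_num)
  · -- backward: c < 1 → integrable
    intro hc1
    have h1 : IntervalIntegrable (fun x : ℝ => x ^ (-c)) volume 0 1 :=
      intervalIntegral.intervalIntegrable_rpow' (by linarith)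
    have h2 : IntervalIntegrable (fun x : ℝ => (1 - x) ^ (-c)) volume 0 1 := by
      have h' := h1.comp_sub_left 1
      have h'' : IntervalIntegrable (fun x : ℝ => (1 - x) ^ (-c)) volume 1 0 := by
        simpa using h'
      exact h''.symm
    have h3 : IntegrableOn (fun x : ℝ => (1 - x) ^ (-c)) (Ioo (0:ℝ) 1) := by
      have := (intervalIntegrable_iff.1 h2)
      rw [uIoc_of_le (by norm_num : (0:ℝ) ≤ 1)] at this
      exact this.mono_set Ioo_subset_Ioc_self
    have hbound : IntegrableOn (fun x : ℝ => A * (1 - x) ^ (-c)) (Ioo (0:ℝ) 1) :=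
      h3.const_mul A
    apply Integrable.mono' hbound hmeas.aestronglyMeasurable
    filter_upwards [ae_restrict_mem measurableSet_Ioo] with α hα
    have hα0 : 0 < α := hα.1
    have hα1 : 0 < 1 - α := by linarith [hα.2]
    have hX := key α hα
    have hXpos : 0 < A * (α / (1 - α)) ^ c := by positivity
    have hle : (α / (1 - α)) ^ c ≤ (1 - α) ^ (-c) := by
      have : α / (1 - α) ≤ (1 - α)⁻¹ := by
        rw [div_le_iff₀ hα1, inv_mul_cancel₀ hα1.ne']
        linarith [hα.2]
      calc (α / (1 - α)) ^ c ≤ ((1 - α)⁻¹) ^ c :=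
            Real.rpow_le_rpow (by positivity) this hc0.le
        _ = (1 - α) ^ (-c) := by
            rw [← Real.rpow_neg_one (1 - α), ← Real.rpow_mul hα1.le]
            norm_num
    have habs : |max (k * V * Real.exp (μ * τ + c * Real.log (α / (1 - α))) - N * J) 0|
        = max (k * V * Real.exp (μ * τ + c * Real.log (α / (1 - α))) - N * J) 0 :=
      abs_of_nonneg (le_max_right _ _)
    rw [Real.norm_eq_abs, habs]
    apply max_le
    · rw [hX]
      have := mul_le_mul_of_nonneg_left hle hA0.le
      nlinarith [mul_pos hN hJ]
    · positivity
end

section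
/- Let N, M, k, J, r > 0, μ ∈ ℝ, τ > 0 and V > 0, and for σ ∈ (0, π/(√3 τ)) define f_w(σ, V) = (e^{−rτ}/(N + M k)) ∫₀¹ max(k·V·exp(μτ + (σ√3 τ/π)·ln(α/(1−α))) − N·J, 0) dα. Then σ ↦ f_w(σ, V) is monotone nondecreasing on (0, π/(√3 τ)): if 0 < σ₁ ≤ σ₂ < π/(√3 τ), then f_w(σ₁, V) ≤ f_w(σ₂, V). -/
open Real Set MeasureTheory

/-- Auxiliary integrand for the warrant price. -/
noncomputable def gAux (A B c : ℝ) (α : ℝ) : ℝ :=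
  max (A * Real.exp (c * Real.log (α / (1 - α))) - B) 0

lemma gAux_reflect (A B c α : ℝ) :
    gAux A B c (1 - α) = max (A * Real.exp (-(c * Real.log (α / (1 - α)))) - B) 0 := by
  unfold gAux
  rw [show (1:ℝ) - (1 - α) = α by ring, ← inv_div, Real.log_inv, mul_neg]

/-- Monotonicity of `u ↦ max (A u − B) 0 + max (A/u − B) 0` on `[1, ∞)`. -/
lemma psi_mono {A B u v : ℝ} (hA : 0 < A) (hu : 1 ≤ u) (huv : u ≤ v) :
    max (A * u - B) 0 + max (A / u - B) 0 ≤ max (A * v - B) 0 + max (A / v - B) 0 := by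
  have hu0 : 0 < u := lt_of_lt_of_le one_pos hu
  have hv0 : 0 < v := lt_of_lt_of_le hu0 huv
  have hqp : A / v ≤ A / u := div_le_div_of_nonneg_left hA.le hu0 huv
  have key : (A / u - A / v) * (u * v) = A * v - A * u := by field_simp
  have huv1 : (1:ℝ) ≤ u * v := by nlinarith
  rcases le_or_gt (A / u) B with h | h
  · have h2 : A / v ≤ B := hqp.trans h
    rw [max_eq_right (by linarith : A / u - B ≤ 0), max_eq_right (by linarith : A / v - B ≤ 0)]
    have : A * u - B ≤ A * v - B := by nlinarith
    exact add_le_add_left (max_le_max this le_rfl) 0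
  · have hAuu : A / u ≤ A * u := by
      have h1u : (1:ℝ) ≤ u * u := by nlinarith
      rw [div_le_iff₀ hu0]; nlinarith
    have hAu : B < A * u := h.trans_le hAuu
    have hAv : B < A * v := hAu.trans_le (by nlinarith)
    rw [max_eq_left (by linarith : 0 ≤ A * u - B), max_eq_left (by linarith : 0 ≤ A * v - B),
      max_eq_left (by linarith : 0 ≤ A / u - B)]
    rcases le_or_gt (A / v) B with h3 | h3
    · rw [max_eq_right (by linarith : A / v - B ≤ 0)]
      nlinarith
    · rw [max_eq_left (by linarith : 0 ≤ A / v - B)]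
      nlinarith

/-- Symmetrized pointwise monotonicity in the exponent coefficient. -/
lemma pair_mono {A B c₁ c₂ : ℝ} (hA : 0 < A) (hc₁ : 0 ≤ c₁) (hc : c₁ ≤ c₂) (y : ℝ) :
    max (A * Real.exp (c₁ * y) - B) 0 + max (A * Real.exp (-(c₁ * y)) - B) 0 ≤
    max (A * Real.exp (c₂ * y) - B) 0 + max (A * Real.exp (-(c₂ * y)) - B) 0 := by
  have hc₂ : 0 ≤ c₂ := hc₁.trans hc
  rcases le_total 0 y with hy | hy
  · have h1 : (1:ℝ) ≤ Real.exp (c₁ * y) := Real.one_le_exp (by positivity)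
    have h2 : Real.exp (c₁ * y) ≤ Real.exp (c₂ * y) := Real.exp_le_exp.2 (by nlinarith)
    have e : ∀ c : ℝ, A * Real.exp (-(c * y)) = A / Real.exp (c * y) := by
      intro c; rw [Real.exp_neg, div_eq_mul_inv]
    rw [e c₁, e c₂]
    exact psi_mono hA h1 h2
  · have h1 : (1:ℝ) ≤ Real.exp (-(c₁ * y)) := Real.one_le_exp (by nlinarith)
    have h2 : Real.exp (-(c₁ * y)) ≤ Real.exp (-(c₂ * y)) := Real.exp_le_exp.2 (by nlinarith)
    have e : ∀ c : ℝ, A * Real.exp (c * y) = A / Real.exp (-(c * y)) := by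
      intro c; rw [Real.exp_neg, div_inv_eq_mul]
    rw [e c₁, e c₂]
    linarith [psi_mono (B := B) hA h1 h2]

lemma gAux_measurable (A B c : ℝ) : Measurable (gAux A B c) := by
  unfold gAux
  exact ((measurable_const.mul ((Real.measurable_log.comp
    (measurable_id.div (measurable_const.sub measurable_id))).const_mul c).exp).sub
    measurable_const).max measurable_const

/-- Integrability of the integrand on `(0,1)` when `0 ≤ c < 1`. -/
lemma integrableOn_gAux {A B c : ℝ} (hA : 0 < A) (hB : 0 ≤ B) (hc0 : 0 ≤ c) (hc1 : c < 1) :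
    IntegrableOn (gAux A B c) (Ioo (0:ℝ) 1) := by
  have hdom : IntegrableOn (fun α : ℝ => A * (1 - α) ^ (-c)) (Ioo (0:ℝ) 1) := by
    have h1 : IntervalIntegrable (fun x : ℝ => x ^ (-c)) volume 0 1 :=
      intervalIntegral.intervalIntegrable_rpow' (by linarith)
    have h2 : IntervalIntegrable (fun x : ℝ => (1 - x) ^ (-c)) volume 0 1 := by
      simpa using (h1.comp_sub_left 1).symm
    have h3 : IntegrableOn (fun x : ℝ => (1 - x) ^ (-c)) (Ioc (0:ℝ) 1) :=
      (intervalIntegrable_iff_integrableOn_Ioc_of_le (by norm_num)).mp h2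
    exact (h3.mono_set Ioo_subset_Ioc_self).const_mul A
  refine hdom.integrable.mono' (gAux_measurable A B c).aestronglyMeasurable ?_
  rw [ae_restrict_iff' measurableSet_Ioo]
  filter_upwards with α hα
  obtain ⟨h0, h1'⟩ := hα
  have h1α : (0:ℝ) < 1 - α := by linarith
  have ht : 0 < α / (1 - α) := div_pos h0 h1α
  have keyexp : Real.exp (c * Real.log (α / (1 - α))) = (α / (1 - α)) ^ c := by
    rw [Real.rpow_def_of_pos ht, mul_comm]
  have hle : (α / (1 - α)) ^ c ≤ (1 - α) ^ (-c) := by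
    rw [Real.rpow_neg h1α.le, ← Real.inv_rpow h1α.le]
    refine Real.rpow_le_rpow ht.le ?_ hc0
    calc α / (1 - α) ≤ 1 / (1 - α) := by gcongr
    _ = (1 - α)⁻¹ := one_div _
  rw [Real.norm_eq_abs, abs_of_nonneg (le_max_right _ _)]
  unfold gAux
  apply max_le
  · rw [keyexp]
    have : A * (α / (1 - α)) ^ c ≤ A * (1 - α) ^ (-c) := by
      exact mul_le_mul_of_nonneg_left hle hA.le
    linarith
  · positivity

/-- the equity warrant price `f_w(σ, V)` is monotone nondecreasing
in the volatility `σ` on `(0, π/(√3 τ))`. -/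
theorem warrant_price_monotone_in_sigma
    (N M k J r μ τ V : ℝ)
    (hN : 0 < N) (hM : 0 < M) (hk : 0 < k) (hJ : 0 < J) (hr : 0 < r)
    (hτ : 0 < τ) (hV : 0 < V)
    (f_w : ℝ → ℝ)
    (hf : ∀ σ : ℝ, f_w σ = (Real.exp (-r * τ) / (N + M * k)) *
      ∫ α in Ioo (0 : ℝ) 1,
        max (k * V * Real.exp (μ * τ + (σ * Real.sqrt 3 * τ / π) * Real.log (α / (1 - α)))
          - N * J) 0)
    (σ₁ σ₂ : ℝ) (h₁ : 0 < σ₁) (h₁₂ : σ₁ ≤ σ₂) (h₂ : σ₂ < π / (Real.sqrt 3 * τ)) :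
    f_w σ₁ ≤ f_w σ₂ := by
  have hπ : 0 < π := Real.pi_pos
  have hs3 : 0 < Real.sqrt 3 := Real.sqrt_pos.2 (by norm_num)
  set A : ℝ := k * V * Real.exp (μ * τ) with hAdef
  have hA : 0 < A := by positivity
  set B : ℝ := N * J with hBdef
  have hB : 0 ≤ B := by positivity
  -- rewrite the integrand as `gAux`
  have hrw : ∀ σ : ℝ,
      (fun α : ℝ => max (k * V * Real.exp (μ * τ +
          (σ * Real.sqrt 3 * τ / π) * Real.log (α / (1 - α))) - N * J) 0)
      = gAux A B (σ * Real.sqrt 3 * τ / π) := by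
    intro σ; funext α; unfold gAux
    congr 1
    rw [Real.exp_add, hAdef, hBdef]
    ring
  set c₁ : ℝ := σ₁ * Real.sqrt 3 * τ / π with hc₁def
  set c₂ : ℝ := σ₂ * Real.sqrt 3 * τ / π with hc₂def
  have hc₁0 : 0 ≤ c₁ := by positivity
  have hc12 : c₁ ≤ c₂ := by
    rw [hc₁def, hc₂def]; gcongr
  have hc₂1 : c₂ < 1 := by
    rw [hc₂def, div_lt_one hπ]
    calc σ₂ * Real.sqrt 3 * τ = σ₂ * (Real.sqrt 3 * τ) := by ring
    _ < (π / (Real.sqrt 3 * τ)) * (Real.sqrt 3 * τ) :=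
        mul_lt_mul_of_pos_right h₂ (by positivity)
    _ = π := by field_simp
  have hc₁1 : c₁ < 1 := lt_of_le_of_lt hc12 hc₂1
  -- reflection machinery
  have hmp : MeasurePreserving (fun t : ℝ => 1 - t) volume volume :=
    Measure.measurePreserving_sub_left volume 1
  have hemb : MeasurableEmbedding (fun t : ℝ => 1 - t) :=
    (Homeomorph.subLeft (1:ℝ)).measurableEmbedding
  have hpre : (fun t : ℝ => 1 - t) ⁻¹' (Ioo 0 1) = Ioo 0 1 := by
    ext x; simp only [mem_preimage, mem_Ioo]
    constructor <;> intro h <;> constructor <;> linarith [h.1, h.2]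
  have refl : ∀ F : ℝ → ℝ,
      (∫ x in Ioo (0:ℝ) 1, F (1 - x)) = ∫ x in Ioo (0:ℝ) 1, F x := by
    intro F
    have := hmp.setIntegral_preimage_emb hemb F (Ioo 0 1)
    rwa [hpre] at this
  have irefl : ∀ F : ℝ → ℝ, IntegrableOn F (Ioo (0:ℝ) 1) →
      IntegrableOn (fun x : ℝ => F (1 - x)) (Ioo (0:ℝ) 1) := by
    intro F hF
    have := (hmp.integrableOn_comp_preimage hemb (f := F) (s := Ioo 0 1)).2 hF
    rwa [hpre] at this
  -- integrability
  have I1 : IntegrableOn (gAux A B c₁) (Ioo (0:ℝ) 1) := integrableOn_gAux hA hB hc₁0 hc₁1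
  have I2 : IntegrableOn (gAux A B c₂) (Ioo (0:ℝ) 1) :=
    integrableOn_gAux hA hB (hc₁0.trans hc12) hc₂1
  have R1 : IntegrableOn (fun α : ℝ => gAux A B c₁ (1 - α)) (Ioo (0:ℝ) 1) := irefl _ I1
  have R2 : IntegrableOn (fun α : ℝ => gAux A B c₂ (1 - α)) (Ioo (0:ℝ) 1) := irefl _ I2
  have E1 : (∫ α in Ioo (0:ℝ) 1, gAux A B c₁ (1 - α)) = ∫ α in Ioo (0:ℝ) 1, gAux A B c₁ α :=
    refl _
  have E2 : (∫ α in Ioo (0:ℝ) 1, gAux A B c₂ (1 - α)) = ∫ α in Ioo (0:ℝ) 1, gAux A B c₂ α :=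
    refl _
  -- the symmetrized comparison
  have key : (∫ α in Ioo (0:ℝ) 1, (gAux A B c₁ α + gAux A B c₁ (1 - α)))
      ≤ ∫ α in Ioo (0:ℝ) 1, (gAux A B c₂ α + gAux A B c₂ (1 - α)) := by
    refine setIntegral_mono_on (I1.add R1) (I2.add R2) measurableSet_Ioo fun α hα => ?_
    rw [gAux_reflect, gAux_reflect]
    show gAux A B c₁ α + _ ≤ gAux A B c₂ α + _
    unfold gAux
    exact pair_mono hA hc₁0 hc12 _
  have sum1 : (∫ α in Ioo (0:ℝ) 1, (gAux A B c₁ α + gAux A B c₁ (1 - α)))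
      = (∫ α in Ioo (0:ℝ) 1, gAux A B c₁ α) + ∫ α in Ioo (0:ℝ) 1, gAux A B c₁ (1 - α) :=
    integral_add I1 R1
  have sum2 : (∫ α in Ioo (0:ℝ) 1, (gAux A B c₂ α + gAux A B c₂ (1 - α)))
      = (∫ α in Ioo (0:ℝ) 1, gAux A B c₂ α) + ∫ α in Ioo (0:ℝ) 1, gAux A B c₂ (1 - α) :=
    integral_add I2 R2
  have main : (∫ α in Ioo (0:ℝ) 1, gAux A B c₁ α) ≤ ∫ α in Ioo (0:ℝ) 1, gAux A B c₂ α := by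
    rw [sum1, sum2, E1, E2] at key; linarith
  rw [hf σ₁, hf σ₂]
  have hC : 0 ≤ Real.exp (-r * τ) / (N + M * k) := by positivity
  refine mul_le_mul_of_nonneg_left ?_ hC
  calc (∫ α in Ioo (0:ℝ) 1,
        max (k * V * Real.exp (μ * τ + (σ₁ * Real.sqrt 3 * τ / π) * Real.log (α / (1 - α)))
          - N * J) 0)
      = ∫ α in Ioo (0:ℝ) 1, gAux A B c₁ α := by rw [hrw σ₁]
    _ ≤ ∫ α in Ioo (0:ℝ) 1, gAux A B c₂ α := main
    _ = ∫ α in Ioo (0:ℝ) 1,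
        max (k * V * Real.exp (μ * τ + (σ₂ * Real.sqrt 3 * τ / π) * Real.log (α / (1 - α)))
          - N * J) 0 := by rw [hrw σ₂]
end

section
/- Let N, M, k, J, r > 0, μ ∈ ℝ, τ > 0 and σ ∈ (0, π/(√3 τ)), and for V > 0 define f_w(σ, V) = (e^{−rτ}/(N + M k)) ∫₀¹ max(k·V·exp(μτ + (σ√3 τ/π)·ln(α/(1−α))) − N·J, 0) dα. Then f_w(σ, V) → +∞ as V → +∞. -/
open Real Set MeasureTheory Filter Topology

/-- the equity warrant price `f_w(σ, V)` tends to `+∞` as `V → +∞`. -/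
theorem warrant_price_tendsto_atTop
    (N M k J r μ τ σ : ℝ)
    (hN : 0 < N) (hM : 0 < M) (hk : 0 < k) (hJ : 0 < J) (hr : 0 < r)
    (hτ : 0 < τ) (hσ : σ ∈ Ioo 0 (π / (Real.sqrt 3 * τ)))
    (f_w : ℝ → ℝ)
    (hf : ∀ V : ℝ, f_w V = (Real.exp (-r * τ) / (N + M * k)) *
      ∫ α in Ioo (0 : ℝ) 1,
        max (k * V * Real.exp (μ * τ + (σ * Real.sqrt 3 * τ / π) * Real.log (α / (1 - α)))
          - N * J) 0) :
    Tendsto f_w atTop atTop := by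
  have hπ : (0 : ℝ) < π := Real.pi_pos
  have hs3 : (0 : ℝ) < Real.sqrt 3 := Real.sqrt_pos.mpr (by norm_num)
  set c : ℝ := σ * Real.sqrt 3 * τ / π with hc_def
  have hc0 : 0 < c := by
    apply div_pos _ hπ
    exact mul_pos (mul_pos hσ.1 hs3) hτ
  have hc1 : c < 1 := by
    rw [hc_def, div_lt_one hπ]
    have := hσ.2
    rw [lt_div_iff₀ (mul_pos hs3 hτ)] at this
    nlinarith
  set C : ℝ := Real.exp (-r * τ) / (N + M * k) with hC_def
  have hC : 0 < C := div_pos (Real.exp_pos _) (by positivity)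
  -- measurability of the integrand
  have hmeas : ∀ V : ℝ, Measurable fun α : ℝ =>
      max (k * V * Real.exp (μ * τ + c * Real.log (α / (1 - α))) - N * J) 0 := by
    intro V
    apply Measurable.max _ measurable_const
    apply Measurable.sub _ measurable_const
    apply Measurable.const_mul
    apply Real.measurable_exp.comp
    apply Measurable.const_add
    apply Measurable.const_mul
    exact Real.measurable_log.comp ((measurable_id.div (measurable_const.sub measurable_id)))
  -- the dominating function is integrable
  have hdom : IntegrableOn (fun α : ℝ => (1 - α) ^ (-c)) (Ioo (0:ℝ) 1) := by
    have h1 : IntervalIntegrable (fun x : ℝ => x ^ (-c)) volume 0 1 :=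
      intervalIntegral.intervalIntegrable_rpow' (by linarith)
    have h2 := h1.comp_sub_left 1
    simp only [sub_zero, sub_self] at h2
    have h3 := h2.symm
    rw [intervalIntegrable_iff_integrableOn_Ioo_of_le (by norm_num)] at h3
    exact h3
  -- integrability of the integrand, for V > 0
  have hint : ∀ V : ℝ, 0 < V → IntegrableOn (fun α : ℝ =>
      max (k * V * Real.exp (μ * τ + c * Real.log (α / (1 - α))) - N * J) 0)
      (Ioo (0:ℝ) 1) := by
    intro V hV
    apply Integrable.mono' (hdom.const_mul (k * V * Real.exp (μ * τ)))
      ((hmeas V).aestronglyMeasurable)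
    refine (ae_restrict_iff' measurableSet_Ioo).mpr (ae_of_all _ fun α hα => ?_)
    obtain ⟨hα0, hα1⟩ := hα
    have h1α : 0 < 1 - α := by linarith
    have hxpos : 0 < α / (1 - α) := div_pos hα0 h1α
    have hrw : Real.exp (μ * τ + c * Real.log (α / (1 - α)))
        = Real.exp (μ * τ) * (α / (1 - α)) ^ c := by
      rw [Real.exp_add, Real.rpow_def_of_pos hxpos, mul_comm c]
    have hαc : α ^ c ≤ 1 := Real.rpow_le_one hα0.le hα1.le hc0.le
    have hbd : (α / (1 - α)) ^ c ≤ (1 - α) ^ (-c) := by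
      rw [Real.div_rpow hα0.le h1α.le, Real.rpow_neg h1α.le]
      rw [div_eq_mul_inv]
      exact mul_le_of_le_one_left (by positivity) hαc
    have hnn : (0:ℝ) ≤ max (k * V * Real.exp (μ * τ + c * Real.log (α / (1 - α))) - N * J) 0 :=
      le_max_right _ _
    rw [Real.norm_of_nonneg hnn]
    rw [max_le_iff]
    constructor
    · rw [hrw]
      have : k * V * (Real.exp (μ * τ) * (α / (1 - α)) ^ c)
          ≤ k * V * Real.exp (μ * τ) * (1 - α) ^ (-c) := by
        rw [mul_assoc (k * V)]
        gcongr
      nlinarith [mul_pos hN hJ]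
    · positivity
  -- lower bound for V > 0
  have hlow : ∀ V : ℝ, 0 < V → C * (1 / 2 * (k * V * Real.exp (μ * τ) - N * J)) ≤ f_w V := by
    intro V hV
    rw [hf V]
    have key : (1 / 2 : ℝ) * (k * V * Real.exp (μ * τ) - N * J) ≤
        ∫ α in Ioo (0:ℝ) 1,
          max (k * V * Real.exp (μ * τ + c * Real.log (α / (1 - α))) - N * J) 0 := by
      have step1 : ∫ α in Ioo (1/2 : ℝ) 1,
          max (k * V * Real.exp (μ * τ + c * Real.log (α / (1 - α))) - N * J) 0 ≤
          ∫ α in Ioo (0:ℝ) 1,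
          max (k * V * Real.exp (μ * τ + c * Real.log (α / (1 - α))) - N * J) 0 := by
        apply setIntegral_mono_set (hint V hV)
        · exact ae_of_all _ fun α => le_max_right _ _
        · exact HasSubset.Subset.eventuallyLE (Ioo_subset_Ioo (by norm_num) le_rfl)
      have step2 : ∫ α in Ioo (1/2 : ℝ) 1, (k * V * Real.exp (μ * τ) - N * J) ≤
          ∫ α in Ioo (1/2 : ℝ) 1,
          max (k * V * Real.exp (μ * τ + c * Real.log (α / (1 - α))) - N * J) 0 := by
        apply setIntegral_mono_on ((integrableOn_const_iff).mpr (Or.inr (by simp)))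
          ((hint V hV).mono_set (Ioo_subset_Ioo (by norm_num) le_rfl)) measurableSet_Ioo
        intro α hα
        obtain ⟨hα0, hα1⟩ := hα
        have h1α : 0 < 1 - α := by linarith
        have hx1 : (1:ℝ) ≤ α / (1 - α) := (one_le_div h1α).mpr (by linarith)
        have hlogpos : 0 ≤ Real.log (α / (1 - α)) := Real.log_nonneg hx1
        refine le_trans ?_ (le_max_left _ _)
        have : Real.exp (μ * τ) ≤ Real.exp (μ * τ + c * Real.log (α / (1 - α))) :=
          Real.exp_le_exp.mpr (by nlinarith)
        nlinarith [mul_pos hk hV]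
      have step0 : ∫ α in Ioo (1/2 : ℝ) 1, (k * V * Real.exp (μ * τ) - N * J)
          = (1 / 2 : ℝ) * (k * V * Real.exp (μ * τ) - N * J) := by
        rw [setIntegral_const]
        rw [Real.volume_real_Ioo]
        norm_num [ENNReal.toReal_ofReal]
      linarith
    calc C * (1 / 2 * (k * V * Real.exp (μ * τ) - N * J))
        ≤ C * ∫ α in Ioo (0:ℝ) 1,
          max (k * V * Real.exp (μ * τ + c * Real.log (α / (1 - α))) - N * J) 0 := by
          exact mul_le_mul_of_nonneg_left key hC.le
      _ = _ := rfl
  -- conclude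
  have htend : Tendsto (fun V => C * (1 / 2 * (k * V * Real.exp (μ * τ) - N * J)))
      atTop atTop := by
    apply Tendsto.const_mul_atTop hC
    apply Tendsto.const_mul_atTop (by norm_num : (0:ℝ) < 1/2)
    apply tendsto_atTop_add_const_right
    have hpos : 0 < k * Real.exp (μ * τ) := by positivity
    have : Tendsto (fun V : ℝ => k * Real.exp (μ * τ) * V) atTop atTop :=
      Tendsto.const_mul_atTop hpos tendsto_id
    convert this using 2 with V
    ring
  apply tendsto_atTop_mono' atTop _ htend
  filter_upwards [eventually_gt_atTop 0] with V hV
  exact hlow V hV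
end

section
/- Let N, M, k, J, r > 0, μ ∈ ℝ, τ > 0 and σ ∈ (0, π/(√3 τ)), and for V > 0 define f_w(σ, V) = (e^{−rτ}/(N + M k)) ∫₀¹ max(k·V·exp(μτ + (σ√3 τ/π)·ln(α/(1−α))) − N·J, 0) dα. Then for every V > 0 at which the set {α ∈ (0,1) : k·V·exp(μτ + (σ√3 τ/π)·ln(α/(1−α))) = N·J} has Lebesgue measure zero, the function V ↦ f_w(σ, V) is differentiable at V with derivative ∂f_w/∂V = (e^{−rτ} k/(N + M k)) ∫₀¹ exp(μτ + (σ√3 τ/π)·ln(α/(1−α)))·𝟙{k·V·exp(μτ + (σ√3 τ/π)·ln(α/(1−α))) > N·J} dα; in particular 0 ≤ ∂f_w/∂V ≤ (e^{−rτ} k/(N + M k)) ∫₀¹ exp(μτ + (σ√3 τ/π)·ln(α/(1−α))) dα. -/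
open Real Set MeasureTheory Filter Topology

/-- at every `V > 0` where the "at-the-money" set has Lebesgue
measure zero, `V ↦ f_w(σ, V)` is differentiable with derivative
`(e^{−rτ}k/(N+Mk)) ∫₀¹ exp(μτ + c·ln(α/(1−α))) 𝟙{payoff positive} dα`, and this
derivative lies between `0` and `(e^{−rτ}k/(N+Mk)) ∫₀¹ exp(μτ + c·ln(α/(1−α))) dα`. -/
theorem warrant_price_deriv_in_V
    (N M k J r μ τ σ : ℝ)
    (hN : 0 < N) (hM : 0 < M) (hk : 0 < k) (hJ : 0 < J) (hr : 0 < r)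
    (hτ : 0 < τ) (hσ : σ ∈ Ioo 0 (π / (Real.sqrt 3 * τ)))
    (f_w : ℝ → ℝ)
    (hf : ∀ V : ℝ, f_w V = (Real.exp (-r * τ) / (N + M * k)) *
      ∫ α in Ioo (0 : ℝ) 1,
        max (k * V * Real.exp (μ * τ + (σ * Real.sqrt 3 * τ / π) * Real.log (α / (1 - α)))
          - N * J) 0)
    (V : ℝ) (hV : 0 < V)
    (hzero : volume {α ∈ Ioo (0 : ℝ) 1 |
      k * V * Real.exp (μ * τ + (σ * Real.sqrt 3 * τ / π) * Real.log (α / (1 - α)))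
        = N * J} = 0) :
    HasDerivAt f_w
      ((Real.exp (-r * τ) * k / (N + M * k)) *
        ∫ α in Ioo (0 : ℝ) 1,
          Real.exp (μ * τ + (σ * Real.sqrt 3 * τ / π) * Real.log (α / (1 - α))) *
            (if k * V * Real.exp (μ * τ + (σ * Real.sqrt 3 * τ / π) * Real.log (α / (1 - α)))
                > N * J then (1 : ℝ) else 0)) V ∧
    0 ≤ (Real.exp (-r * τ) * k / (N + M * k)) *
        ∫ α in Ioo (0 : ℝ) 1,
          Real.exp (μ * τ + (σ * Real.sqrt 3 * τ / π) * Real.log (α / (1 - α))) *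
            (if k * V * Real.exp (μ * τ + (σ * Real.sqrt 3 * τ / π) * Real.log (α / (1 - α)))
                > N * J then (1 : ℝ) else 0) ∧
    (Real.exp (-r * τ) * k / (N + M * k)) *
        ∫ α in Ioo (0 : ℝ) 1,
          Real.exp (μ * τ + (σ * Real.sqrt 3 * τ / π) * Real.log (α / (1 - α))) *
            (if k * V * Real.exp (μ * τ + (σ * Real.sqrt 3 * τ / π) * Real.log (α / (1 - α)))
                > N * J then (1 : ℝ) else 0)
      ≤ (Real.exp (-r * τ) * k / (N + M * k)) *
        ∫ α in Ioo (0 : ℝ) 1,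
          Real.exp (μ * τ + (σ * Real.sqrt 3 * τ / π) * Real.log (α / (1 - α))) := by
  
  classical
  set c : ℝ := σ * Real.sqrt 3 * τ / π with hc_def
  set g : ℝ → ℝ := fun α => Real.exp (μ * τ + c * Real.log (α / (1 - α))) with hg_def
  have hπ : (0 : ℝ) < π := Real.pi_pos
  have hs3 : (0 : ℝ) < Real.sqrt 3 := Real.sqrt_pos.mpr (by norm_num)
  have hσ0 := hσ.1
  have hc0 : 0 < c := by rw [hc_def]; positivity
  have hc1 : c < 1 := by
    rw [hc_def, div_lt_one hπ]
    have := hσ.2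
    rw [lt_div_iff₀ (by positivity)] at this
    nlinarith
  have hD : 0 < N + M * k := by positivity
  have hg_meas : Measurable g := by
    apply Real.measurable_exp.comp
    apply Measurable.const_add
    exact (Real.measurable_log.comp
      (measurable_id.div (measurable_const.sub measurable_id))).const_mul c
  have hg_pos : ∀ α, 0 < g α := fun α => Real.exp_pos _
  -- integrability of g on Ioo 0 1
  have hbound_int : IntegrableOn (fun α : ℝ => (1 - α) ^ (-c)) (Ioo (0:ℝ) 1) volume := by
    have h1 : IntervalIntegrable (fun t : ℝ => t ^ (-c)) volume 0 1 :=
      intervalIntegral.intervalIntegrable_rpow' (by linarith)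
    have h2 := (h1.comp_sub_left 1).symm
    simp only [sub_zero, sub_self] at h2
    exact h2.1.mono_set Ioo_subset_Ioc_self
  have hg_int : IntegrableOn g (Ioo (0:ℝ) 1) volume := by
    apply Integrable.mono' (hbound_int.const_mul (Real.exp (μ * τ)))
    · exact hg_meas.aestronglyMeasurable
    · filter_upwards [ae_restrict_mem measurableSet_Ioo] with α hα
      obtain ⟨h0, h1⟩ := hα
      have h1' : 0 < 1 - α := by linarith
      rw [Real.norm_eq_abs, abs_of_pos (hg_pos α), hg_def]
      have hlog : Real.log (α / (1 - α)) = Real.log α - Real.log (1 - α) :=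
        Real.log_div (ne_of_gt h0) (ne_of_gt h1')
      have hlogα : Real.log α ≤ 0 := Real.log_nonpos h0.le h1.le
      have key : μ * τ + c * Real.log (α / (1 - α)) ≤ μ * τ + Real.log (1 - α) * (-c) := by
        rw [hlog]; nlinarith
      calc Real.exp (μ * τ + c * Real.log (α / (1 - α)))
          ≤ Real.exp (μ * τ + Real.log (1 - α) * (-c)) := Real.exp_le_exp.mpr key
        _ = Real.exp (μ * τ) * (1 - α) ^ (-c) := by
            rw [Real.exp_add, Real.rpow_def_of_pos h1']
  have hind_meas : Measurable (fun α => if k * V * g α > N * J then (1:ℝ) else 0) := by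
    apply Measurable.ite _ measurable_const measurable_const
    exact measurableSet_lt measurable_const (hg_meas.const_mul (k * V))
  -- a.e. the payoff is not at the money
  have hae_ne : ∀ᵐ α ∂(volume.restrict (Ioo (0:ℝ) 1)), k * V * g α ≠ N * J := by
    have h0 : ∀ᵐ α ∂volume, α ∉ {α ∈ Ioo (0:ℝ) 1 | k * V * g α = N * J} :=
      measure_eq_zero_iff_ae_notMem.mp hzero
    rw [ae_restrict_iff' measurableSet_Ioo]
    filter_upwards [h0] with α hα hmem heq
    exact hα ⟨hmem, heq⟩
  -- a.e. differentiability of the integrand in V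
  have hdiff : ∀ᵐ α ∂(volume.restrict (Ioo (0:ℝ) 1)),
      HasDerivAt (fun x => max (k * x * g α - N * J) 0)
        (k * (g α * if k * V * g α > N * J then (1:ℝ) else 0)) V := by
    filter_upwards [hae_ne] with α hne
    have hd : HasDerivAt (fun x : ℝ => k * x * g α - N * J) (k * g α) V := by
      simpa using (((hasDerivAt_id V).const_mul k).mul_const (g α)).sub_const (N * J)
    have hcont : ContinuousAt (fun x : ℝ => k * x * g α - N * J) V := by fun_prop
    rcases lt_or_gt_of_ne hne with hlt | hgt
    · rw [if_neg (not_lt.mpr hlt.le), mul_zero, mul_zero]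
      have hev : ∀ᶠ x in 𝓝 V, k * x * g α - N * J < 0 :=
        hcont.eventually (eventually_lt_nhds (show k * V * g α - N * J < 0 by linarith))
      have heq : (fun x => max (k * x * g α - N * J) 0) =ᶠ[𝓝 V] fun _ => (0:ℝ) := by
        filter_upwards [hev] with x hx
        exact max_eq_right hx.le
      exact (hasDerivAt_const V (0:ℝ)).congr_of_eventuallyEq heq
    · rw [if_pos hgt, mul_one]
      have hev : ∀ᶠ x in 𝓝 V, 0 < k * x * g α - N * J :=
        hcont.eventually (eventually_gt_nhds (show 0 < k * V * g α - N * J by linarith))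
      have heq : (fun x => max (k * x * g α - N * J) 0) =ᶠ[𝓝 V]
          fun x => k * x * g α - N * J := by
        filter_upwards [hev] with x hx
        exact max_eq_left hx.le
      exact hd.congr_of_eventuallyEq heq
  -- Lipschitz bound
  have hlipOn : ∀ᵐ α ∂(volume.restrict (Ioo (0:ℝ) 1)),
      LipschitzOnWith (Real.nnabs (k * g α))
        (fun x => max (k * x * g α - N * J) 0) (Metric.ball V 1) := by
    apply ae_of_all
    intro α
    apply LipschitzWith.lipschitzOnWith
    apply LipschitzWith.of_dist_le_mul
    intro x y
    rw [Real.dist_eq, Real.dist_eq, Real.coe_nnabs]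
    calc |max (k * x * g α - N * J) 0 - max (k * y * g α - N * J) 0|
        ≤ |(k * x * g α - N * J) - (k * y * g α - N * J)| := abs_max_sub_max_le_abs _ _ _
      _ = |k * g α| * |x - y| := by rw [← abs_mul]; congr 1; ring
  have hF_meas : ∀ᶠ x in 𝓝 V, AEStronglyMeasurable
      (fun α => max (k * x * g α - N * J) 0) (volume.restrict (Ioo (0:ℝ) 1)) := by
    apply Eventually.of_forall
    intro x
    exact (((hg_meas.const_mul (k * x)).sub_const (N * J)).max measurable_const).aestronglyMeasurable
  have hF_int : Integrable (fun α => max (k * V * g α - N * J) 0)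
      (volume.restrict (Ioo (0:ℝ) 1)) := by
    apply Integrable.mono' (hg_int.const_mul (k * V))
    · exact (((hg_meas.const_mul (k * V)).sub_const (N * J)).max measurable_const).aestronglyMeasurable
    · apply ae_of_all
      intro α
      rw [Real.norm_eq_abs, abs_of_nonneg (le_max_right _ _)]
      have h2 : (0:ℝ) ≤ k * V * g α := by positivity
      exact max_le (by nlinarith [hg_pos α]) h2
  have hF'_meas : AEStronglyMeasurable
      (fun α => k * (g α * if k * V * g α > N * J then (1:ℝ) else 0))
      (volume.restrict (Ioo (0:ℝ) 1)) :=
    ((hg_meas.mul hind_meas).const_mul k).aestronglyMeasurable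
  have hbound' : Integrable (fun α => k * g α) (volume.restrict (Ioo (0:ℝ) 1)) :=
    hg_int.const_mul k
  obtain ⟨hF'_int, hder⟩ := hasDerivAt_integral_of_dominated_loc_of_lip
    (F := fun x α => max (k * x * g α - N * J) 0)
    (F' := fun α => k * (g α * if k * V * g α > N * J then (1:ℝ) else 0))
    (bound := fun α => k * g α)
    (Metric.ball_mem_nhds V one_pos) hF_meas hF_int hF'_meas hlipOn hbound' hdiff
  -- rewrite the derivative
  have hintrw : (∫ α in Ioo (0:ℝ) 1, k * (g α * if k * V * g α > N * J then (1:ℝ) else 0))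
      = k * ∫ α in Ioo (0:ℝ) 1, g α * if k * V * g α > N * J then (1:ℝ) else 0 :=
    integral_const_mul _ _
  have hgi_int : Integrable (fun α => g α * if k * V * g α > N * J then (1:ℝ) else 0)
      (volume.restrict (Ioo (0:ℝ) 1)) := by
    apply hg_int.mono' ((hg_meas.mul hind_meas).aestronglyMeasurable)
    apply ae_of_all
    intro α
    rw [Real.norm_eq_abs, Pi.mul_apply, abs_of_nonneg (mul_nonneg (hg_pos α).le (by split <;> norm_num))]
    exact mul_le_of_le_one_right (hg_pos α).le (by split <;> norm_num)
  have hI_nonneg : 0 ≤ ∫ α in Ioo (0:ℝ) 1, g α * if k * V * g α > N * J then (1:ℝ) else 0 :=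
    integral_nonneg fun α => mul_nonneg (hg_pos α).le (by split <;> norm_num)
  have hmono : (∫ α in Ioo (0:ℝ) 1, g α * if k * V * g α > N * J then (1:ℝ) else 0)
      ≤ ∫ α in Ioo (0:ℝ) 1, g α :=
    integral_mono hgi_int hg_int fun α =>
      mul_le_of_le_one_right (hg_pos α).le (by split <;> norm_num)
  refine ⟨?_, mul_nonneg (by positivity) hI_nonneg,
    mul_le_mul_of_nonneg_left hmono (by positivity)⟩
  have hfw : f_w = fun x => (Real.exp (-r * τ) / (N + M * k)) *
      ∫ α in Ioo (0:ℝ) 1, max (k * x * g α - N * J) 0 := funext hf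
  rw [hfw]
  have := hder.const_mul (Real.exp (-r * τ) / (N + M * k))
  rw [hintrw] at this
  convert this using 1
  case e'_9 => ring
  all_goals rfl
end
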